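/- arXiv:2311.10058 — 2 statements merged into one kernel-verified Lean document; each statement's English description precedes it below -/
import Mathlib

section
/- Let μ, γ ∈ (0,1) and let (G_μ[0])^{1/2} be the Fourier multiplier with symbol (√μ|ξ| tanh(√μ|ξ|)/(1+γ tanh(√μ|ξ|)))^{1/2}. Then there is a universal constant C > 0 such that for all f, (1/C) |f|_{Ḣ_μ^{1/2}} ≤ μ^{-1/2} |(G_μ[0])^{1/2} f|_{L²} ≤ C |f|_{Ḣ_μ^{1/2}}, where |f|_{Ḣ_μ^{1/2}} = | |ξ|(1+√μ|ξ|)^{-1/2} f̂ |_{L²_ξ}. -/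
noncomputable section
open MeasureTheory

private lemma tanh_eq_exp (x : ℝ) :
    Real.tanh x = (Real.exp (2*x) - 1) / (Real.exp (2*x) + 1) := by
  have h1 : Real.exp (-x) = (Real.exp x)⁻¹ := Real.exp_neg x
  have h2 : Real.exp (2*x) = Real.exp x ^ 2 := by
    rw [two_mul, Real.exp_add, sq]
  have hx : Real.exp x ≠ 0 := (Real.exp_pos x).ne'
  have hd2 : Real.exp (2*x) + 1 ≠ 0 := by positivity
  rw [Real.tanh_eq_sinh_div_cosh, Real.sinh_eq, Real.cosh_eq]
  rw [div_eq_div_iff (by positivity) hd2, h1, h2]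
  field_simp

private lemma my_tanh_nonneg {t : ℝ} (ht : 0 ≤ t) : 0 ≤ Real.tanh t := by
  rw [tanh_eq_exp]
  have h : (1:ℝ) ≤ Real.exp (2*t) := Real.one_le_exp (by linarith)
  have h2 : (0:ℝ) < Real.exp (2*t) + 1 := by positivity
  exact div_nonneg (by linarith) h2.le

private lemma my_tanh_le_one (t : ℝ) : Real.tanh t ≤ 1 := by
  rw [tanh_eq_exp, div_le_one (by positivity)]
  linarith

private lemma my_tanh_le_two_mul {t : ℝ} (ht : 0 ≤ t) : Real.tanh t ≤ 2 * t := by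
  rw [tanh_eq_exp, div_le_iff₀ (by positivity)]
  have h := Real.add_one_le_exp (-(2*t))
  have hE := Real.one_le_exp (show (0:ℝ) ≤ 2*t by linarith)
  have h2 : Real.exp (-(2*t)) * Real.exp (2*t) = 1 := by
    rw [← Real.exp_add]; simp
  nlinarith [Real.exp_pos (2*t)]

private lemma my_div_le_tanh {t : ℝ} (ht : 0 ≤ t) : t / (1 + t) ≤ Real.tanh t := by
  rw [tanh_eq_exp, div_le_div_iff₀ (by linarith) (by positivity)]
  have h := Real.add_one_le_exp (2*t)
  nlinarith

private lemma my_continuous_tanh : Continuous Real.tanh := by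
  have h : Real.tanh = fun x => Real.sinh x / Real.cosh x :=
    funext fun x => Real.tanh_eq_sinh_div_cosh x
  rw [h]
  exact Real.continuous_sinh.div Real.continuous_cosh fun x => (Real.cosh_pos x).ne'

private lemma symbol_lower {t γ : ℝ} (ht : 0 ≤ t) (hγ0 : 0 < γ) (hγ1 : γ < 1) :
    t^2 / (1+t) ≤ 2 * (t * Real.tanh t / (1 + γ * Real.tanh t)) := by
  have hT0 : 0 ≤ Real.tanh t := my_tanh_nonneg ht
  have hT1 : Real.tanh t ≤ 1 := my_tanh_le_one t
  have hTl : t ≤ Real.tanh t * (1+t) := by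
    have := my_div_le_tanh ht
    rw [div_le_iff₀ (by linarith)] at this
    linarith
  have hD : (0:ℝ) < 1 + γ * Real.tanh t := by nlinarith
  have hrw : 2 * (t * Real.tanh t / (1 + γ * Real.tanh t)) =
      (2 * (t * Real.tanh t)) / (1 + γ * Real.tanh t) := by ring
  rw [hrw, div_le_div_iff₀ (by linarith) hD]
  nlinarith [sq_nonneg t, mul_nonneg ht hT0, mul_nonneg (mul_nonneg ht ht) hT0]

private lemma symbol_upper {t γ : ℝ} (ht : 0 ≤ t) (hγ0 : 0 < γ) (hγ1 : γ < 1) :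
    t * Real.tanh t / (1 + γ * Real.tanh t) ≤ 4 * (t^2 / (1+t)) := by
  have hT0 : 0 ≤ Real.tanh t := my_tanh_nonneg ht
  have hT1 : Real.tanh t ≤ 1 := my_tanh_le_one t
  have hT2 : Real.tanh t ≤ 2*t := my_tanh_le_two_mul ht
  have hD : (0:ℝ) < 1 + γ * Real.tanh t := by nlinarith
  have hrw : 4 * (t^2 / (1+t)) = (4 * t^2) / (1+t) := by ring
  rw [hrw, div_le_div_iff₀ hD (by linarith)]
  nlinarith [mul_le_mul_of_nonneg_left hT2 ht,
    mul_le_mul_of_nonneg_left hT1 (mul_nonneg ht ht),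
    mul_nonneg (mul_nonneg (mul_nonneg ht ht) hγ0.le) hT0]

/-- uniform norm equivalence for the square root of the flat
two-layer Dirichlet–Neumann symbol: with `(G_μ[0])^{1/2}` the multiplier whose symbol
squared is `√μ|ξ|tanh(√μ|ξ|)/(1+γtanh(√μ|ξ|))`,
`(1/C)|f|_{Ḣ_μ^{1/2}} ≤ μ^{-1/2}|(G_μ[0])^{1/2}f|_{L²} ≤ C|f|_{Ḣ_μ^{1/2}}`, where
`|f|_{Ḣ_μ^{1/2}}² = ∫ ξ²(1+√μ|ξ|)^{-1} ‖f̂‖²` (norms via Plancherel). -/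
theorem flat_DN_sqrt_equivalence :
    ∃ C > (0:ℝ), ∀ μ ∈ Set.Ioo (0:ℝ) 1, ∀ γ ∈ Set.Ioo (0:ℝ) 1, ∀ f : SchwartzMap ℝ ℂ,
      (1 / C) *
          (∫ ξ : ℝ, ξ ^ 2 / (1 + Real.sqrt μ * |ξ|) *
              ‖FourierTransform.fourier (⇑f : ℝ → ℂ) ξ‖ ^ 2).sqrt ≤
        μ ^ (-(1:ℝ)/2) *
          (∫ ξ : ℝ,
              Real.sqrt μ * |ξ| * Real.tanh (Real.sqrt μ * |ξ|) /
                  (1 + γ * Real.tanh (Real.sqrt μ * |ξ|)) *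
                ‖FourierTransform.fourier (⇑f : ℝ → ℂ) ξ‖ ^ 2).sqrt ∧
      μ ^ (-(1:ℝ)/2) *
          (∫ ξ : ℝ,
              Real.sqrt μ * |ξ| * Real.tanh (Real.sqrt μ * |ξ|) /
                  (1 + γ * Real.tanh (Real.sqrt μ * |ξ|)) *
                ‖FourierTransform.fourier (⇑f : ℝ → ℂ) ξ‖ ^ 2).sqrt ≤
        C * (∫ ξ : ℝ, ξ ^ 2 / (1 + Real.sqrt μ * |ξ|) *
              ‖FourierTransform.fourier (⇑f : ℝ → ℂ) ξ‖ ^ 2).sqrt := by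
  refine ⟨2, two_pos, ?_⟩
  rintro μ ⟨hμ0, hμ1⟩ γ ⟨hγ0, hγ1⟩ f
  have hg : FourierTransform.fourier (⇑f : ℝ → ℂ) = ⇑(SchwartzMap.fourierTransformCLM ℂ f) := rfl
  rw [hg]
  set g := SchwartzMap.fourierTransformCLM ℂ f with hgdef
  have hsq : 0 < Real.sqrt μ := Real.sqrt_pos.2 hμ0
  have ht0 : ∀ ξ : ℝ, 0 ≤ Real.sqrt μ * |ξ| := fun ξ => by positivity
  have htt : ∀ ξ : ℝ, (Real.sqrt μ * |ξ|)^2 = μ * ξ^2 := fun ξ => by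
    rw [mul_pow, Real.sq_sqrt hμ0.le, sq_abs]
  set G : ℝ → ℝ := fun ξ => ξ ^ 2 / (1 + Real.sqrt μ * |ξ|) * ‖g ξ‖ ^ 2 with hGdef
  set F : ℝ → ℝ := fun ξ =>
    Real.sqrt μ * |ξ| * Real.tanh (Real.sqrt μ * |ξ|) /
      (1 + γ * Real.tanh (Real.sqrt μ * |ξ|)) * ‖g ξ‖ ^ 2 with hFdef
  -- nonnegativity pointwise
  have hG0 : ∀ ξ, 0 ≤ G ξ := fun ξ => by
    have := ht0 ξ; positivity
  have hF0 : ∀ ξ, 0 ≤ F ξ := fun ξ => by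
    have hT0 := my_tanh_nonneg (ht0 ξ)
    have hD : (0:ℝ) < 1 + γ * Real.tanh (Real.sqrt μ * |ξ|) := by nlinarith
    have := ht0 ξ
    positivity
  -- pointwise comparison
  have hlow : ∀ ξ, μ * G ξ ≤ 2 * F ξ := by
    intro ξ
    have h := symbol_lower (ht0 ξ) hγ0 hγ1
    have hrw : μ * G ξ = (Real.sqrt μ * |ξ|)^2 / (1 + Real.sqrt μ * |ξ|) * ‖g ξ‖^2 := by
      simp only [hGdef, htt ξ]; ring
    have hrw2 : 2 * F ξ = 2 * (Real.sqrt μ * |ξ| * Real.tanh (Real.sqrt μ * |ξ|) /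
        (1 + γ * Real.tanh (Real.sqrt μ * |ξ|))) * ‖g ξ‖^2 := by
      simp only [hFdef]; ring
    rw [hrw, hrw2]
    exact mul_le_mul_of_nonneg_right h (by positivity)
  have hupp : ∀ ξ, F ξ ≤ 4 * (μ * G ξ) := by
    intro ξ
    have h := symbol_upper (ht0 ξ) hγ0 hγ1
    have hrw : 4 * (μ * G ξ) = 4 * ((Real.sqrt μ * |ξ|)^2 / (1 + Real.sqrt μ * |ξ|)) *
        ‖g ξ‖^2 := by
      simp only [hGdef, htt ξ]; ring
    rw [hrw, hFdef]
    exact mul_le_mul_of_nonneg_right (by simpa using h) (by positivity)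
  -- integrability
  set M : ℝ := SchwartzMap.seminorm ℝ 0 0 g with hMdef
  have hM0 : 0 ≤ M := apply_nonneg _ _
  have hgbd : ∀ ξ, ‖g ξ‖ ≤ M := fun ξ => SchwartzMap.norm_le_seminorm ℝ g ξ
  have hint0 : Integrable (fun ξ : ℝ => M * (‖ξ‖ ^ 2 * ‖g ξ‖)) volume :=
    (g.integrable_pow_mul volume 2).const_mul M
  have hcont1 : Continuous fun ξ : ℝ => 1 + Real.sqrt μ * |ξ| :=
    continuous_const.add (continuous_const.mul continuous_abs)
  have hcG : Continuous G := by
    refine ((continuous_pow 2).div hcont1 fun ξ => ?_).mul (g.continuous.norm.pow 2)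
    have := ht0 ξ; positivity
  have hcF : Continuous F := by
    refine (((continuous_const.mul continuous_abs).mul
        (my_continuous_tanh.comp (continuous_const.mul continuous_abs))).div
        (continuous_const.add (continuous_const.mul
          (my_continuous_tanh.comp (continuous_const.mul continuous_abs))))
        fun ξ => ?_).mul (g.continuous.norm.pow 2)
    have hT0 := my_tanh_nonneg (ht0 ξ)
    simp only [Pi.add_apply, Pi.mul_apply, Function.comp_apply]
    nlinarith
  have hGle : ∀ ξ, ‖G ξ‖ ≤ M * (‖ξ‖ ^ 2 * ‖g ξ‖) := by
    intro ξ
    rw [Real.norm_eq_abs, abs_of_nonneg (hG0 ξ)]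
    have h1 : ξ ^ 2 / (1 + Real.sqrt μ * |ξ|) ≤ ξ ^ 2 :=
      div_le_self (sq_nonneg ξ) (by linarith [ht0 ξ])
    have h2 : G ξ ≤ ξ ^ 2 * ‖g ξ‖ ^ 2 :=
      mul_le_mul_of_nonneg_right h1 (by positivity)
    have h3 : ‖ξ‖ ^ 2 = ξ ^ 2 := by rw [Real.norm_eq_abs, sq_abs]
    rw [h3]
    nlinarith [hgbd ξ, norm_nonneg (g ξ), sq_nonneg ξ,
      mul_nonneg (mul_nonneg (sq_nonneg ξ) (norm_nonneg (g ξ)))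
        (sub_nonneg.2 (hgbd ξ))]
  have hintG : Integrable G volume :=
    hint0.mono' hcG.aestronglyMeasurable (Filter.Eventually.of_forall hGle)
  have hintF : Integrable F volume := by
    refine (hintG.const_mul (4 * μ)).mono' hcF.aestronglyMeasurable
      (Filter.Eventually.of_forall fun ξ => ?_)
    rw [Real.norm_eq_abs, abs_of_nonneg (hF0 ξ)]
    calc F ξ ≤ 4 * (μ * G ξ) := hupp ξ
    _ = 4 * μ * G ξ := by ring
  -- integral comparison
  set A : ℝ := ∫ ξ, G ξ with hAdef
  set B : ℝ := ∫ ξ, F ξ with hBdef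
  have hA0 : 0 ≤ A := integral_nonneg hG0
  have hB0 : 0 ≤ B := integral_nonneg hF0
  have h1 : μ * A ≤ 2 * B := by
    have := integral_mono (hintG.const_mul μ) (hintF.const_mul 2) hlow
    rwa [integral_const_mul, integral_const_mul] at this
  have h2 : B ≤ 4 * (μ * A) := by
    have := integral_mono hintF (hintG.const_mul (4 * μ)) (fun ξ => by
      calc F ξ ≤ 4 * (μ * G ξ) := hupp ξ
      _ = 4 * μ * G ξ := by ring)
    rw [integral_const_mul] at this
    linarith
  -- final arithmetic
  have hrp : μ ^ (-(1:ℝ)/2) = (Real.sqrt μ)⁻¹ := by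
    rw [show (-(1:ℝ)/2) = -(1/2) by norm_num, Real.rpow_neg hμ0.le, ← Real.sqrt_eq_rpow]
  rw [hrp]
  have h4 : Real.sqrt 4 = 2 := by
    rw [show (4:ℝ) = 2 ^ 2 by norm_num, Real.sqrt_sq (by norm_num : (0:ℝ) ≤ 2)]
  have hsA : 0 ≤ Real.sqrt A := Real.sqrt_nonneg A
  have hsB : 0 ≤ Real.sqrt B := Real.sqrt_nonneg B
  constructor
  · have key := Real.sqrt_le_sqrt (show μ * A ≤ 4 * B by linarith)
    rw [Real.sqrt_mul hμ0.le, Real.sqrt_mul (by norm_num : (0:ℝ) ≤ 4), h4] at key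
    rw [inv_mul_eq_div, le_div_iff₀ hsq]
    linarith [key]
  · have key := Real.sqrt_le_sqrt h2
    rw [Real.sqrt_mul (by norm_num : (0:ℝ) ≤ 4), Real.sqrt_mul hμ0.le, h4] at key
    rw [inv_mul_eq_div, div_le_iff₀ hsq]
    linarith [key]
end
end

section
/- Let μ, γ ∈ (0,1) and define a(ξ) = (1 + γ tanh(√μ|ξ|))^{-1/2}. Then there exists a constant C, independent of μ and γ, such that for all ξ, ρ ∈ ℝ, |a(ξ) − a(ρ)| · ⟨ρ⟩ ≤ C ⟨ξ − ρ⟩, where ⟨ξ⟩ = (1 + ξ²)^{1/2}. -/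
noncomputable section

/-- derivative of tanh -/
lemma my_hasDerivAt_tanh (x : ℝ) :
    HasDerivAt Real.tanh ((Real.cosh x ^ 2)⁻¹) x := by
  have h := (Real.hasDerivAt_sinh x).div (Real.hasDerivAt_cosh x)
    (ne_of_gt (Real.cosh_pos x))
  have heq : (fun y => Real.sinh y / Real.cosh y) = Real.tanh := by
    funext y; rw [Real.tanh_eq_sinh_div_cosh]
  rw [show (Real.sinh / Real.cosh) = Real.tanh from heq] at h
  refine h.congr_deriv ?_
  have h1 := Real.cosh_sq_sub_sinh_sq x
  have h2 := (Real.cosh_pos x).ne'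
  rw [inv_eq_one_div]; congr 1
  nlinarith [h1]

lemma tanh_nonneg' {x : ℝ} (hx : 0 ≤ x) : 0 ≤ Real.tanh x := by
  rw [Real.tanh_eq_sinh_div_cosh]
  exact div_nonneg (Real.sinh_nonneg_iff.mpr hx) (Real.cosh_pos x).le

lemma tanh_lt_one' (x : ℝ) : Real.tanh x < 1 := by
  rw [Real.tanh_eq_sinh_div_cosh]
  exact (div_lt_one (Real.cosh_pos x)).mpr (Real.sinh_lt_cosh x)

/-- MVT for tanh on `[t, s]` with `0 ≤ t`. -/
lemma tanh_mvt {t s : ℝ} (ht : 0 ≤ t) (hts : t ≤ s) :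
    |Real.tanh s - Real.tanh t| ≤ (Real.cosh t ^ 2)⁻¹ * (s - t) := by
  have hconv : Convex ℝ (Set.Icc t s) := convex_Icc t s
  have hder : ∀ x ∈ Set.Icc t s, HasDerivWithinAt Real.tanh ((Real.cosh x ^ 2)⁻¹)
      (Set.Icc t s) x := fun x _ => (my_hasDerivAt_tanh x).hasDerivWithinAt
  have hbound : ∀ x ∈ Set.Icc t s, ‖(Real.cosh x ^ 2)⁻¹‖ ≤ (Real.cosh t ^ 2)⁻¹ := by
    intro x hx
    have hc : Real.cosh t ≤ Real.cosh x := by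
      rw [Real.cosh_le_cosh]
      rw [abs_of_nonneg ht, abs_of_nonneg (ht.trans hx.1)]
      exact hx.1
    have hct : 0 < Real.cosh t := Real.cosh_pos t
    rw [Real.norm_eq_abs, abs_of_nonneg (by positivity)]
    apply inv_anti₀ (by positivity)
    exact pow_le_pow_left₀ hct.le hc 2
  have := hconv.norm_image_sub_le_of_norm_hasDerivWithin_le hder hbound
    (Set.left_mem_Icc.mpr hts) (Set.right_mem_Icc.mpr hts)
  simpa [Real.norm_eq_abs, abs_of_nonneg (sub_nonneg.mpr hts)] using this

lemma cosh_sq_inv_le_one (t : ℝ) : (Real.cosh t ^ 2)⁻¹ ≤ 1 := by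
  rw [inv_le_one_iff₀]
  right
  nlinarith [Real.one_le_cosh t]

lemma cosh_sq_inv_le_exp {t : ℝ} (ht : 0 ≤ t) :
    (Real.cosh t ^ 2)⁻¹ ≤ 4 * Real.exp (-(2 * t)) := by
  have h1 : Real.exp t / 2 ≤ Real.cosh t := by
    rw [Real.cosh_eq]
    have := (Real.exp_pos (-t)).le
    linarith
  have h2 : Real.exp t ^ 2 / 4 ≤ Real.cosh t ^ 2 := by
    nlinarith [Real.exp_pos t, Real.cosh_pos t]
  have h3 : 0 < Real.exp t ^ 2 / 4 := by positivity
  calc (Real.cosh t ^ 2)⁻¹ ≤ (Real.exp t ^ 2 / 4)⁻¹ :=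
        inv_anti₀ h3 h2
    _ = 4 * Real.exp (-(2 * t)) := by
        rw [Real.exp_neg]
        rw [show Real.exp (2 * t) = Real.exp t ^ 2 by
          rw [← Real.exp_nat_mul]; norm_num [mul_comm]]
        field_simp
  
/-- difference of inverse square roots for arguments in [1,2] -/
lemma sqrt_inv_diff_le {u v : ℝ} (hu1 : 1 ≤ u) (hu2 : u ≤ 2) (hv1 : 1 ≤ v) (hv2 : v ≤ 2) :
    |Real.sqrt u⁻¹ - Real.sqrt v⁻¹| ≤ |u - v| := by
  have main : ∀ a b : ℝ, 1 ≤ a → a ≤ 2 → 1 ≤ b → b ≤ 2 → a ≤ b →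
      Real.sqrt a⁻¹ - Real.sqrt b⁻¹ ≤ b - a := by
    intro a b ha1 ha2 hb1 hb2 hab
    set x := Real.sqrt a⁻¹ with hxdef
    set y := Real.sqrt b⁻¹ with hydef
    have ha0 : (0:ℝ) < a := by linarith
    have hb0 : (0:ℝ) < b := by linarith
    have hx2 : x ^ 2 = a⁻¹ := Real.sq_sqrt (by positivity)
    have hy2 : y ^ 2 = b⁻¹ := Real.sq_sqrt (by positivity)
    have hxu : x ^ 2 * a = 1 := by rw [hx2]; field_simp
    have hyv : y ^ 2 * b = 1 := by rw [hy2]; field_simp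
    have hxlb : 1/2 ≤ x := by
      have h4 : (4:ℝ)⁻¹ ≤ a⁻¹ := inv_anti₀ ha0 (by linarith)
      calc (1:ℝ)/2 = Real.sqrt 4⁻¹ := by
            rw [show (4:ℝ)⁻¹ = (1/2)^2 by norm_num, Real.sqrt_sq (by norm_num)]
        _ ≤ x := Real.sqrt_le_sqrt h4
    have hylb : 1/2 ≤ y := by
      have h4 : (4:ℝ)⁻¹ ≤ b⁻¹ := inv_anti₀ hb0 (by linarith)
      calc (1:ℝ)/2 = Real.sqrt 4⁻¹ := by
            rw [show (4:ℝ)⁻¹ = (1/2)^2 by norm_num, Real.sqrt_sq (by norm_num)]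
        _ ≤ y := Real.sqrt_le_sqrt h4
    have hxy : y ≤ x := Real.sqrt_le_sqrt (inv_anti₀ ha0 hab)
    have hsum : 1 ≤ (x + y) * (a * b) := by
      have h1 : (1:ℝ) ≤ x + y := by linarith
      have h2 : (1:ℝ) ≤ a * b := by nlinarith
      nlinarith
    have hid : (x - y) * ((x + y) * (a * b)) = b - a := by
      linear_combination b * hxu - a * hyv
    have hpos := mul_nonneg (sub_nonneg.mpr hxy) (sub_nonneg.mpr hsum)
    nlinarith [hid, hpos]
  rcases le_total u v with h | h
  · have h1 := main u v hu1 hu2 hv1 hv2 h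
    have hxy : Real.sqrt v⁻¹ ≤ Real.sqrt u⁻¹ :=
      Real.sqrt_le_sqrt (inv_anti₀ (by linarith) h)
    rw [abs_of_nonneg (by linarith), abs_of_nonpos (by linarith)]
    linarith
  · have h1 := main v u hv1 hv2 hu1 hu2 h
    have hxy : Real.sqrt u⁻¹ ≤ Real.sqrt v⁻¹ :=
      Real.sqrt_le_sqrt (inv_anti₀ (by linarith) h)
    rw [abs_of_nonpos (by linarith), abs_of_nonneg (by linarith)]
    linarith

set_option maxHeartbeats 1000000 in
/-- kernel bound for `a(ξ) = (1+γtanh(√μ|ξ|))^{-1/2}`: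
`|a(ξ) − a(ρ)|·⟨ρ⟩ ≤ C⟨ξ−ρ⟩` uniformly in `μ, γ ∈ (0,1)`. -/
theorem kernel_bound_a :
    ∃ C > (0:ℝ), ∀ μ ∈ Set.Ioo (0:ℝ) 1, ∀ γ ∈ Set.Ioo (0:ℝ) 1, ∀ ξ ρ : ℝ,
      |Real.sqrt ((1 + γ * Real.tanh (Real.sqrt μ * |ξ|))⁻¹) -
          Real.sqrt ((1 + γ * Real.tanh (Real.sqrt μ * |ρ|))⁻¹)| *
        Real.sqrt (1 + ρ ^ 2) ≤
      C * Real.sqrt (1 + (ξ - ρ) ^ 2) := by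
  refine ⟨100, by norm_num, ?_⟩
  rintro μ ⟨hμ0, hμ1⟩ γ ⟨hγ0, hγ1⟩ ξ ρ
  have hsqμ0 : 0 ≤ Real.sqrt μ := Real.sqrt_nonneg μ
  have hsqμ1 : Real.sqrt μ ≤ 1 := by
    rw [show (1:ℝ) = Real.sqrt 1 by simp]
    exact Real.sqrt_le_sqrt hμ1.le
  set s := Real.sqrt μ * |ξ| with hsdef
  set t := Real.sqrt μ * |ρ| with htdef
  have hs0 : 0 ≤ s := by positivity
  have ht0 : 0 ≤ t := by positivity
  set T₁ := Real.tanh s with hT1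
  set T₂ := Real.tanh t with hT2
  have hT1n : 0 ≤ T₁ := tanh_nonneg' hs0
  have hT2n : 0 ≤ T₂ := tanh_nonneg' ht0
  have hT1l : T₁ < 1 := tanh_lt_one' s
  have hT2l : T₂ < 1 := tanh_lt_one' t
  -- Step 1: |a(ξ)-a(ρ)| ≤ |tanh s - tanh t|
  have step1 : |Real.sqrt ((1 + γ * T₁)⁻¹) - Real.sqrt ((1 + γ * T₂)⁻¹)| ≤ |T₁ - T₂| := by
    have h := sqrt_inv_diff_le (u := 1 + γ * T₁) (v := 1 + γ * T₂)
      (by nlinarith) (by nlinarith) (by nlinarith) (by nlinarith)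
    calc |Real.sqrt ((1 + γ * T₁)⁻¹) - Real.sqrt ((1 + γ * T₂)⁻¹)|
        ≤ |(1 + γ * T₁) - (1 + γ * T₂)| := h
      _ = γ * |T₁ - T₂| := by
          rw [show (1 + γ * T₁) - (1 + γ * T₂) = γ * (T₁ - T₂) by ring,
            abs_mul, abs_of_nonneg hγ0.le]
      _ ≤ 1 * |T₁ - T₂| := by
          apply mul_le_mul_of_nonneg_right hγ1.le (abs_nonneg _)
      _ = |T₁ - T₂| := one_mul _
  have hρle : Real.sqrt (1 + ρ ^ 2) ≤ 1 + |ρ| := by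
    rw [show 1 + |ρ| = Real.sqrt ((1 + |ρ|)^2) by
      rw [Real.sqrt_sq (by positivity)]]
    apply Real.sqrt_le_sqrt
    nlinarith [abs_nonneg ρ, sq_abs ρ]
  have hξρle : |ξ - ρ| ≤ Real.sqrt (1 + (ξ - ρ) ^ 2) := by
    rw [show |ξ - ρ| = Real.sqrt ((ξ - ρ)^2) by rw [Real.sqrt_sq_eq_abs]]
    apply Real.sqrt_le_sqrt; linarith
  have hone : (1:ℝ) ≤ Real.sqrt (1 + (ξ - ρ) ^ 2) := by
    have h := Real.sqrt_le_sqrt (show (1:ℝ) ≤ 1 + (ξ - ρ) ^ 2 by nlinarith [sq_nonneg (ξ - ρ)])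
    simpa using h
  have hρn : 0 ≤ Real.sqrt (1 + ρ ^ 2) := Real.sqrt_nonneg _
  rcases le_or_gt |ρ| (2 * |ξ - ρ| + 2) with hcase | hcase
  · -- case 1 : |ρ| small
    have hT : |T₁ - T₂| ≤ 2 := by
      rw [abs_sub_le_iff]; constructor <;> nlinarith
    have h9 : Real.sqrt (1 + ρ ^ 2) ≤ 3 * Real.sqrt (1 + (ξ - ρ) ^ 2) := by
      rw [show 3 * Real.sqrt (1 + (ξ - ρ) ^ 2) = Real.sqrt (9 * (1 + (ξ - ρ) ^ 2)) by
        rw [show (9:ℝ) = 3^2 by norm_num, Real.sqrt_mul (by positivity),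
          Real.sqrt_sq (by norm_num)]]
      apply Real.sqrt_le_sqrt
      nlinarith [sq_abs ρ, sq_abs (ξ - ρ), abs_nonneg (ξ - ρ), abs_nonneg ρ,
        mul_self_le_mul_self (abs_nonneg ρ) hcase, sq_nonneg (|ξ - ρ| - 1)]
    calc |Real.sqrt ((1 + γ * T₁)⁻¹) - Real.sqrt ((1 + γ * T₂)⁻¹)| * Real.sqrt (1 + ρ ^ 2)
        ≤ 2 * (3 * Real.sqrt (1 + (ξ - ρ) ^ 2)) := by
          apply mul_le_mul (step1.trans hT) h9 hρn (by norm_num)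
      _ ≤ 100 * Real.sqrt (1 + (ξ - ρ) ^ 2) := by
          linarith [Real.sqrt_nonneg (1 + (ξ - ρ) ^ 2)]
  · -- case 2 : |ρ| large
    have habs : |(|ξ| - |ρ|)| ≤ |ξ - ρ| := abs_abs_sub_abs_le_abs_sub ξ ρ
    have hξlb : |ρ| / 2 ≤ |ξ| := by
      have : |ρ| - |ξ| ≤ |ξ - ρ| := by
        have := abs_sub_abs_le_abs_sub ρ ξ
        rwa [abs_sub_comm ξ ρ]
      linarith
    have hmin : Real.sqrt μ * (|ρ| / 2) ≤ min s t := by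
      rw [le_min_iff]
      constructor
      · exact mul_le_mul_of_nonneg_left hξlb hsqμ0
      · apply mul_le_mul_of_nonneg_left _ hsqμ0
        linarith [abs_nonneg ρ]
    set m := min s t with hm
    have hm0 : 0 ≤ m := le_min hs0 ht0
    -- MVT bound
    have key : |T₁ - T₂| ≤ (Real.cosh m ^ 2)⁻¹ * |s - t| := by
      rcases le_total s t with h | h
      · rw [hm, min_eq_left h]
        have h2 : |T₁ - T₂| = |Real.tanh t - Real.tanh s| := by
          rw [hT1, hT2, abs_sub_comm]
        rw [h2]
        calc |Real.tanh t - Real.tanh s| ≤ (Real.cosh s ^ 2)⁻¹ * (t - s) := tanh_mvt hs0 h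
          _ = (Real.cosh s ^ 2)⁻¹ * |s - t| := by
              rw [abs_sub_comm, abs_of_nonneg (sub_nonneg.mpr h)]
      · rw [hm, min_eq_right h]
        calc |T₁ - T₂| ≤ (Real.cosh t ^ 2)⁻¹ * (s - t) := tanh_mvt ht0 h
          _ = (Real.cosh t ^ 2)⁻¹ * |s - t| := by
              rw [abs_of_nonneg (sub_nonneg.mpr h)]
    have hcosh : (Real.cosh m ^ 2)⁻¹ ≤ 4 * Real.exp (-(Real.sqrt μ * |ρ|)) := by
      calc (Real.cosh m ^ 2)⁻¹ ≤ 4 * Real.exp (-(2 * m)) := cosh_sq_inv_le_exp hm0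
        _ ≤ 4 * Real.exp (-(Real.sqrt μ * |ρ|)) := by
            apply mul_le_mul_of_nonneg_left _ (by norm_num)
            apply Real.exp_le_exp.mpr
            have h2m : Real.sqrt μ * |ρ| ≤ 2 * m := by linarith [hmin]
            linarith
    have hst : |s - t| ≤ Real.sqrt μ * |ξ - ρ| := by
      rw [hsdef, htdef, show Real.sqrt μ * |ξ| - Real.sqrt μ * |ρ|
        = Real.sqrt μ * (|ξ| - |ρ|) by ring, abs_mul, abs_of_nonneg hsqμ0]
      exact mul_le_mul_of_nonneg_left habs hsqμ0
    -- combine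
    set r := Real.sqrt μ * |ρ| with hr
    have hr0 : 0 ≤ r := by positivity
    have hexp1 : Real.exp (-r) ≤ 1 := by
      rw [Real.exp_neg, inv_le_one_iff₀]; right; exact Real.one_le_exp hr0
    have hexp2 : r * Real.exp (-r) ≤ 1 := by
      rw [Real.exp_neg]
      rw [mul_inv_le_iff₀ (Real.exp_pos r), one_mul]
      linarith [Real.add_one_le_exp r]
    have hexppos : 0 < Real.exp (-r) := Real.exp_pos _
    -- 4 * exp(-r) * √μ * (1+|ρ|) ≤ 8
    have hfinal : 4 * Real.exp (-r) * (Real.sqrt μ * (1 + |ρ|)) ≤ 8 := by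
      have h1 : Real.sqrt μ * (1 + |ρ|) = Real.sqrt μ + r := by rw [hr]; ring
      rw [h1]
      nlinarith
    have hT12 : |T₁ - T₂| ≤ 4 * Real.exp (-r) * (Real.sqrt μ * |ξ - ρ|) := by
      calc |T₁ - T₂| ≤ (Real.cosh m ^ 2)⁻¹ * |s - t| := key
        _ ≤ (4 * Real.exp (-r)) * (Real.sqrt μ * |ξ - ρ|) := by
            apply mul_le_mul hcosh hst (abs_nonneg _) (by positivity)
    calc |Real.sqrt ((1 + γ * T₁)⁻¹) - Real.sqrt ((1 + γ * T₂)⁻¹)| * Real.sqrt (1 + ρ ^ 2)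
        ≤ (4 * Real.exp (-r) * (Real.sqrt μ * |ξ - ρ|)) * (1 + |ρ|) := by
          apply mul_le_mul (step1.trans hT12) hρle hρn (by positivity)
      _ = (4 * Real.exp (-r) * (Real.sqrt μ * (1 + |ρ|))) * |ξ - ρ| := by ring
      _ ≤ 8 * |ξ - ρ| := by
          apply mul_le_mul_of_nonneg_right hfinal (abs_nonneg _)
      _ ≤ 100 * Real.sqrt (1 + (ξ - ρ) ^ 2) := by nlinarith
end
end
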